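/- Let k ≥ 1 and let z be a complex number in the common domain of definition (z ≠ F_n/F_{n-1} for all integers n, z ≠ φ, -1/φ, and likewise 1-z avoids these values). Then the bilateral Fibonacci Eisenstein series satisfies 𝓕_{2k}(1-z) = 𝓕_{2k}(z). -/

import Mathlib

/-- For `k ≥ 1` and `z` such that both `z` and `1 - z` avoid all ratios `F_n/F_{n-1}`, `φ`
and `-1/φ`, the bilateral Fibonacci Eisenstein series satisfies `𝓕_{2k}(1-z) = 𝓕_{2k}(z)`. -/
theorem fib_eisenstein_reflection (F : ℤ → ℤ) (h0 : F 0 = 0) (h1 : F 1 = 1)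
    (hrec : ∀ n : ℤ, F n = F (n - 1) + F (n - 2))
    (k : ℕ) (hk : 1 ≤ k) (z : ℂ)
    (hpole : ∀ n : ℤ, z ≠ (F n : ℂ) / (F (n - 1) : ℂ))
    (hphi : z ≠ (((1 + Real.sqrt 5) / 2 : ℝ) : ℂ))
    (hphi' : z ≠ -1 / (((1 + Real.sqrt 5) / 2 : ℝ) : ℂ))
    (hpole' : ∀ n : ℤ, 1 - z ≠ (F n : ℂ) / (F (n - 1) : ℂ))
    (hphi2 : 1 - z ≠ (((1 + Real.sqrt 5) / 2 : ℝ) : ℂ))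
    (hphi2' : 1 - z ≠ -1 / (((1 + Real.sqrt 5) / 2 : ℝ) : ℂ)) :
    ∑' j : ℤ, (((F j : ℂ) * (1 - z) + (F (j - 1) : ℂ)) ^ (2 * k))⁻¹ =
      ∑' j : ℤ, (((F j : ℂ) * z + (F (j - 1) : ℂ)) ^ (2 * k))⁻¹ := by
  have hstep : ∀ n : ℤ, F (n + 1) = F n + F (n - 1) := by
    intro n
    have h := hrec (n + 1)
    have e1 : n + 1 - 1 = n := by ring
    have e2 : n + 1 - 2 = n - 1 := by ring
    rw [e1, e2] at h
    exact h
  have hm1 : F (-1) = 1 := by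
    have h := hrec 1
    have e1 : (1 : ℤ) - 1 = 0 := by ring
    have e2 : (1 : ℤ) - 2 = -1 := by ring
    rw [e1, e2, h0, h1] at h
    omega
  have hs1 : ∀ m : ℤ, ((m + 1).negOnePow : ℤ) = -(m.negOnePow : ℤ) := by
    intro m; rw [Int.negOnePow_succ]; simp
  have key : ∀ j : ℤ, (F (-j) = ((j + 1).negOnePow : ℤ) * F j) ∧
      (F (-j - 1) = (j.negOnePow : ℤ) * F (j + 1)) := by
    intro j
    induction j using Int.induction_on with
    | zero =>
      constructor
      · simp [h0]
      · norm_num [hm1, h1]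
    | succ i ih =>
      obtain ⟨ih1, ih2⟩ := ih
      have ih1' : F (-(i : ℤ)) = -((i : ℤ).negOnePow : ℤ) * F i := by
        rw [ih1, hs1]
      constructor
      · have e : -((i : ℤ) + 1) = -(i : ℤ) - 1 := by ring
        have s1 : (((i : ℤ) + 1 + 1).negOnePow : ℤ) = ((i : ℤ).negOnePow : ℤ) := by
          rw [hs1, hs1]; ring
        rw [e, s1]
        exact ih2
      · have e : -((i : ℤ) + 1) - 1 = -(i : ℤ) - 2 := by ring
        rw [e]
        have hA := hrec (-(i : ℤ))
        have hB := hstep ((i : ℤ) + 1)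
        have e2 : (i : ℤ) + 1 - 1 = i := by ring
        rw [e2] at hB
        rw [hs1]
        linear_combination -hA + ih1' - ih2 + ((i : ℤ).negOnePow : ℤ) * hB
    | pred i ih =>
      obtain ⟨ih1, ih2⟩ := ih
      have e1 : -(-(i : ℤ)) = (i : ℤ) := by ring
      have e2 : -(-(i : ℤ)) - 1 = (i : ℤ) - 1 := by ring
      rw [e1] at ih1
      rw [e2] at ih2
      have ih1' : F (i : ℤ) = -((-(i : ℤ)).negOnePow : ℤ) * F (-(i : ℤ)) := by
        rw [ih1, hs1]
      constructor
      · have e : -(-(i : ℤ) - 1) = (i : ℤ) + 1 := by ring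
        have e' : -(i : ℤ) - 1 + 1 = -(i : ℤ) := by ring
        rw [e, e']
        have hr := hrec (-(i : ℤ) + 1)
        have f1 : -(i : ℤ) + 1 - 1 = -(i : ℤ) := by ring
        have f2 : -(i : ℤ) + 1 - 2 = -(i : ℤ) - 1 := by ring
        rw [f1, f2] at hr
        have hst := hstep (i : ℤ)
        linear_combination hst + ih1' + ih2 + ((-(i : ℤ)).negOnePow : ℤ) * hr
      · have e : -(-(i : ℤ) - 1) - 1 = (i : ℤ) := by ring
        have e' : -(i : ℤ) - 1 + 1 = -(i : ℤ) := by ring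
        rw [e, e']
        have s1 : ((-(i : ℤ)).negOnePow : ℤ) = -((-(i : ℤ) - 1).negOnePow : ℤ) := by
          have := hs1 (-(i : ℤ) - 1)
          rw [e'] at this
          rw [this]
        rw [ih1', s1]
        ring
  have main : ∀ j : ℤ,
      (((F j : ℂ) * (1 - z) + (F (j - 1) : ℂ)) ^ (2 * k))⁻¹ =
        (((F (-j) : ℂ) * z + (F (-j - 1) : ℂ)) ^ (2 * k))⁻¹ := by
    intro j
    obtain ⟨k1, k2⟩ := key j
    have hst := hstep j
    have hsign : ((F (-j) : ℂ) * z + (F (-j - 1) : ℂ)) =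
        (((j.negOnePow : ℤ) : ℂ)) * ((F j : ℂ) * (1 - z) + (F (j - 1) : ℂ)) := by
      rw [k1, k2, hst, hs1]
      push_cast
      ring
    have hu : (((j.negOnePow : ℤ) : ℂ)) ^ (2 * k) = 1 := by
      rcases Int.units_eq_one_or j.negOnePow with h | h <;> rw [h] <;> push_cast <;>
        simp [pow_mul]
    rw [hsign, mul_pow, hu, one_mul]
  rw [← (Equiv.neg ℤ).tsum_eq (fun j : ℤ => (((F j : ℂ) * z + (F (j - 1) : ℂ)) ^ (2 * k))⁻¹)]
  simp only [Equiv.neg_apply]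
  exact tsum_congr main
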